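/- Let Φ be an invertible n×n complex matrix whose spectrum is contained in ℂ \ (-∞,0] (i.e., Φ has no eigenvalue that is a non-positive real number). Then the improper integral B = (Φ - I) ∫₀^∞ (1/(1+μ)) (μI + Φ)⁻¹ dμ converges (as a Bochner integral of a matrix-valued function on [0,∞)), and the matrix B is a logarithm of Φ, i.e., exp(B) = Φ. -/

import Mathlib

attribute [local instance] Matrix.normedAddCommGroup Matrix.normedSpace

open MeasureTheory Set Filter Topology

set_option linter.unusedSectionVars false
set_option linter.unnecessarySimpa false
set_option maxHeartbeats 4000000

namespace MagnusAux

variable {n : Type*} [Fintype n] [DecidableEq n]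

noncomputable abbrev matNACG : NormedAddCommGroup (Matrix n n ℂ) :=
  { (Matrix.normedAddCommGroup : NormedAddCommGroup (Matrix n n ℂ)) with
    toUniformSpace := Matrix.instUniformSpace n n ℂ
    uniformity_dist := (Matrix.normedAddCommGroup : NormedAddCommGroup (Matrix n n ℂ)).uniformity_dist
    toBornology := (Matrix.normedAddCommGroup : NormedAddCommGroup (Matrix n n ℂ)).toBornology
    cobounded_sets := (Matrix.normedAddCommGroup : NormedAddCommGroup (Matrix n n ℂ)).cobounded_sets }
attribute [local instance] matNACG
noncomputable abbrev matNS {R : Type*} [NormedField R] [NormedSpace R ℂ] : NormedSpace R (Matrix n n ℂ) :=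
  { toModule := Matrix.module
    norm_smul_le := fun a b => (Matrix.normedSpace : NormedSpace R (Matrix n n ℂ)).norm_smul_le a b }
attribute [local instance] matNS

theorem norm_one_le : ‖(1 : Matrix n n ℂ)‖ ≤ 1 := by
  rw [Matrix.norm_le_iff zero_le_one]
  intro i j
  rw [Matrix.one_apply]
  split <;> simp

theorem norm_mul_le (A B : Matrix n n ℂ) :
    ‖A * B‖ ≤ (Fintype.card n : ℝ) * ‖A‖ * ‖B‖ := by
  have h0 : (0:ℝ) ≤ (Fintype.card n : ℝ) * ‖A‖ * ‖B‖ := by positivity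
  rw [Matrix.norm_le_iff h0]
  intro i j
  rw [Matrix.mul_apply]
  calc ‖∑ k, A i k * B k j‖ ≤ ∑ k, ‖A i k * B k j‖ := norm_sum_le _ _
    _ ≤ ∑ _k : n, ‖A‖ * ‖B‖ := Finset.sum_le_sum (fun k _ => by
        rw [norm_mul]
        exact mul_le_mul (A.norm_entry_le_entrywise_sup_norm)
          (B.norm_entry_le_entrywise_sup_norm) (norm_nonneg _) (norm_nonneg _))
    _ = (Fintype.card n : ℝ) * ‖A‖ * ‖B‖ := by
        rw [Finset.sum_const, Finset.card_univ, nsmul_eq_mul, mul_assoc]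

theorem det_ne_zero_of_isUnit {A : Matrix n n ℂ} (h : IsUnit A) : A.det ≠ 0 :=
  ((Matrix.isUnit_iff_isUnit_det A).mp h).ne_zero

theorem continuousOn_matrix_inv {α : Type*} [TopologicalSpace α] {f : α → Matrix n n ℂ}
    {s : Set α} (hf : ContinuousOn f s) (h : ∀ x ∈ s, IsUnit (f x)) :
    ContinuousOn (fun x => (f x)⁻¹) s := by
  have he : ∀ x ∈ s, (f x).det⁻¹ • (f x).adjugate = (f x)⁻¹ := fun x _ => by
    rw [Matrix.inv_def, Ring.inverse_eq_inv']
  refine ContinuousOn.congr ?_ (fun x hx => (he x hx).symm)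
  exact (((continuous_id.matrix_det).comp_continuousOn hf).inv₀
    (fun x hx => det_ne_zero_of_isUnit (h x hx))).smul
    ((continuous_id.matrix_adjugate).comp_continuousOn hf)

theorem continuousAt_matrix_inv {α : Type*} [TopologicalSpace α] {f : α → Matrix n n ℂ}
    {x : α} (hf : ContinuousAt f x) (h : IsUnit (f x)) :
    ContinuousAt (fun x => (f x)⁻¹) x := by
  have he : ∀ y, (f y).det⁻¹ • (f y).adjugate = (f y)⁻¹ := fun y => by
    rw [Matrix.inv_def, Ring.inverse_eq_inv']
  refine ContinuousAt.congr ?_ (Eventually.of_forall he)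
  exact (((continuous_id.matrix_det).continuousAt.comp hf).inv₀
    (det_ne_zero_of_isUnit h)).smul ((continuous_id.matrix_adjugate).continuousAt.comp hf)

theorem norm_pow_le [Nonempty n] (X : Matrix n n ℂ) (k : ℕ) :
    ‖X ^ k‖ ≤ ((Fintype.card n : ℝ) * max ‖X‖ 1) ^ k := by
  have hc : (1:ℝ) ≤ (Fintype.card n : ℝ) := Nat.one_le_cast.mpr Fintype.card_pos
  induction k with
  | zero => simpa using norm_one_le
  | succ k ih =>
      calc ‖X ^ (k+1)‖ = ‖X * X ^ k‖ := by rw [pow_succ']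
        _ ≤ (Fintype.card n : ℝ) * ‖X‖ * ‖X ^ k‖ := norm_mul_le _ _
        _ ≤ ((Fintype.card n : ℝ) * max ‖X‖ 1) * ((Fintype.card n : ℝ) * max ‖X‖ 1) ^ k := by
            apply mul_le_mul _ ih (norm_nonneg _) (by positivity)
            exact mul_le_mul_of_nonneg_left (le_max_left _ _) (by positivity)
        _ = ((Fintype.card n : ℝ) * max ‖X‖ 1) ^ (k+1) := (pow_succ' _ _).symm

theorem norm_pow_le' [Nonempty n] {X : Matrix n n ℂ} (hX : ‖X‖ ≤ 1) (k : ℕ) :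
    ‖X ^ (k+2)‖ ≤ (Fintype.card n : ℝ) * (Fintype.card n : ℝ) ^ k * ‖X‖ ^ 2 := by
  set c := (Fintype.card n : ℝ) with hcdef
  have hc : (1:ℝ) ≤ c := Nat.one_le_cast.mpr Fintype.card_pos
  have key : ∀ m : ℕ, ‖X ^ (m+1)‖ ≤ c ^ m * ‖X‖ ^ (m+1) := by
    intro m
    induction m with
    | zero => simpa using le_refl _
    | succ m ih =>
        calc ‖X ^ (m+2)‖ = ‖X * X ^ (m+1)‖ := by rw [pow_succ']
          _ ≤ c * ‖X‖ * ‖X ^ (m+1)‖ := norm_mul_le _ _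
          _ ≤ c * ‖X‖ * (c ^ m * ‖X‖ ^ (m+1)) := by
              apply mul_le_mul_of_nonneg_left ih (by positivity)
          _ = c ^ (m+1) * ‖X‖ ^ (m+2) := by ring
  calc ‖X ^ (k+2)‖ ≤ c ^ (k+1) * ‖X‖ ^ (k+2) := key (k+1)
    _ = c * c ^ k * (‖X‖ ^ 2 * ‖X‖ ^ k) := by ring
    _ ≤ c * c ^ k * (‖X‖ ^ 2 * 1) := by
        apply mul_le_mul_of_nonneg_left _ (by positivity)
        exact mul_le_mul_of_nonneg_left (pow_le_one₀ (norm_nonneg _) hX) (by positivity)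
    _ = c * c ^ k * ‖X‖ ^ 2 := by ring


open NormedSpace in
theorem exp_quadratic [Nonempty n] {X : Matrix n n ℂ} (hX : ‖X‖ ≤ 1) :
    ‖exp X - 1 - X‖ ≤
      ((Fintype.card n : ℝ) * ∑' k : ℕ, (Fintype.card n : ℝ) ^ k / (Nat.factorial k)) * ‖X‖ ^ 2 := by
  set c := (Fintype.card n : ℝ) with hc
  have hc0 : (0:ℝ) < c := by rw [hc]; exact_mod_cast Fintype.card_pos
  set a : ℕ → Matrix n n ℂ := fun k => ((Nat.factorial k : ℂ))⁻¹ • X ^ k with ha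
  have hnorm : ∀ k, ‖a k‖ = ((Nat.factorial k : ℝ))⁻¹ * ‖X ^ k‖ := by
    intro k
    rw [ha]
    simp [norm_smul]
  have hsum : Summable a := by
    apply Summable.of_norm_bounded (Real.summable_pow_div_factorial (c * max ‖X‖ 1))
    intro k
    rw [hnorm k, div_eq_inv_mul]
    exact mul_le_mul_of_nonneg_left (norm_pow_le X k) (by positivity)
  have hsum1 : Summable (fun k => a (k + 1)) := (summable_nat_add_iff 1).mpr hsum
  have hsum2 : Summable (fun k => a (k + 1 + 1)) := (summable_nat_add_iff 1).mpr hsum1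
  have hexp : exp X = ∑' k, a k := by rw [exp_eq_tsum (𝕂 := ℂ)]
  have hshift : exp X - 1 - X = ∑' k, a (k + 1 + 1) := by
    rw [hexp, hsum.tsum_eq_zero_add, hsum1.tsum_eq_zero_add]
    have h0 : a 0 = 1 := by simp [ha]
    have h1 : a 1 = X := by simp [ha]
    rw [h0, h1]
    abel
  have hb : ∀ k, ‖a (k + 1 + 1)‖ ≤ (c * ‖X‖ ^ 2) * (c ^ k / (Nat.factorial k)) := by
    intro k
    rw [hnorm]
    have e1 : k + 1 + 1 = k + 2 := by omega
    rw [e1]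
    calc ((Nat.factorial (k+2) : ℝ))⁻¹ * ‖X ^ (k+2)‖
        ≤ ((Nat.factorial k : ℝ))⁻¹ * (c * c ^ k * ‖X‖ ^ 2) := by
          apply mul_le_mul ?_ (norm_pow_le' hX k) (norm_nonneg _) (by positivity)
          apply inv_anti₀ (by positivity)
          exact_mod_cast Nat.factorial_le (by omega)
      _ = (c * ‖X‖ ^ 2) * (c ^ k / (Nat.factorial k)) := by ring
  have hsumb : Summable (fun k : ℕ => (c * ‖X‖ ^ 2) * (c ^ k / (Nat.factorial k))) :=
    (Real.summable_pow_div_factorial c).mul_left _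
  have hsumn : Summable (fun k => ‖a (k + 1 + 1)‖) :=
    Summable.of_nonneg_of_le (fun k => norm_nonneg _) hb hsumb
  rw [hshift]
  calc ‖∑' k, a (k + 1 + 1)‖ ≤ ∑' k, ‖a (k + 1 + 1)‖ := norm_tsum_le_tsum_norm hsumn
    _ ≤ ∑' k : ℕ, (c * ‖X‖ ^ 2) * (c ^ k / (Nat.factorial k)) := Summable.tsum_le_tsum hb hsumn hsumb
    _ = (c * ‖X‖ ^ 2) * ∑' k : ℕ, (c ^ k / (Nat.factorial k)) := tsum_mul_left
    _ = (c * ∑' k : ℕ, c ^ k / (Nat.factorial k)) * ‖X‖ ^ 2 := by ring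


/-! ### Setup: the path of matrices -/

variable (Φ : Matrix n n ℂ)

/-- The path `Ps Φ s μ = μ•1 + (1 + s•(Φ-1))`. -/
noncomputable def Ps (s μ : ℝ) : Matrix n n ℂ := (μ : ℂ) • 1 + (1 + (s : ℂ) • (Φ - 1))

theorem Ps_alt (s μ : ℝ) :
    Ps Φ s μ = (s : ℂ) • Φ + (((μ + 1 - s : ℝ)) : ℂ) • (1 : Matrix n n ℂ) := by
  unfold Ps
  push_cast
  module

theorem Ps_zero_right (s : ℝ) : Ps Φ s 0 = 1 + (s : ℂ) • (Φ - 1) := by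
  simp [Ps]

theorem Ps_one_zero : Ps Φ 1 0 = Φ := by
  simp [Ps]

theorem Ps_zero_left (μ : ℝ) : Ps Φ 0 μ = (((μ + 1 : ℝ)) : ℂ) • 1 := by
  have := Ps_alt Φ 0 μ
  simpa using this

theorem commute_lin (a b a' b' : ℂ) :
    Commute (a • Φ + b • 1) (a' • Φ + b' • 1) := by
  show _ * _ = _ * _
  simp only [mul_add, add_mul, smul_mul_assoc, mul_smul_comm, mul_one, one_mul]
  module

theorem commute_Phi_Ps (s μ : ℝ) : Commute Φ (Ps Φ s μ) := by
  have := commute_lin Φ 1 0 (s : ℂ) (((μ + 1 - s : ℝ)) : ℂ)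
  rw [one_smul, zero_smul, add_zero, ← Ps_alt] at this
  exact this

theorem commute_Ps_Ps (s μ s' μ' : ℝ) : Commute (Ps Φ s μ) (Ps Φ s' μ') := by
  rw [Ps_alt, Ps_alt]
  exact commute_lin Φ _ _ _ _

theorem commute_matrix_inv_right {A B : Matrix n n ℂ} (h : Commute A B) (hB : IsUnit B) :
    Commute A B⁻¹ := by
  have hd : IsUnit B.det := (Matrix.isUnit_iff_isUnit_det B).mp hB
  have h1 : B⁻¹ * B = 1 := Matrix.nonsing_inv_mul B hd
  have h2 : B * B⁻¹ = 1 := Matrix.mul_nonsing_inv B hd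
  show A * B⁻¹ = B⁻¹ * A
  calc A * B⁻¹ = B⁻¹ * B * (A * B⁻¹) := by rw [h1, one_mul]
    _ = B⁻¹ * (B * A) * B⁻¹ := by noncomm_ring
    _ = B⁻¹ * (A * B) * B⁻¹ := by rw [h.eq]
    _ = B⁻¹ * A * (B * B⁻¹) := by noncomm_ring
    _ = B⁻¹ * A := by rw [h2, mul_one]

theorem smul_inv_eq {a : ℂ} (ha : a ≠ 0) {A : Matrix n n ℂ} (hA : IsUnit A) :
    (a • A)⁻¹ = a⁻¹ • A⁻¹ := by
  apply Matrix.inv_eq_left_inv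
  rw [smul_mul_smul_comm, inv_mul_cancel₀ ha,
    Matrix.nonsing_inv_mul A ((Matrix.isUnit_iff_isUnit_det A).mp hA), one_smul]

/-! ### Invertibility along the path -/

theorem isUnit_shift (hspec : ∀ x : ℝ, x ≤ 0 → (x : ℂ) ∉ spectrum ℂ Φ) {x : ℝ} (hx : 0 ≤ x) :
    IsUnit ((x : ℂ) • 1 + Φ) := by
  have h1 := hspec (-x) (by linarith)
  rw [spectrum.notMem_iff] at h1
  have h2 : ((x : ℂ) • 1 + Φ) = -(algebraMap ℂ (Matrix n n ℂ) ((-x : ℝ) : ℂ) - Φ) := by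
    rw [Algebra.algebraMap_eq_smul_one]
    push_cast
    module
  rw [h2]
  exact h1.neg

theorem isUnit_Ps (hspec : ∀ x : ℝ, x ≤ 0 → (x : ℂ) ∉ spectrum ℂ Φ) {s μ : ℝ}
    (hs : s ∈ Icc (0:ℝ) 1) (hμ : 0 ≤ μ) : IsUnit (Ps Φ s μ) := by
  rcases eq_or_lt_of_le hs.1 with h0 | h0
  · rw [← h0, Ps_zero_left]
    rw [Matrix.isUnit_iff_isUnit_det, Matrix.det_smul, Matrix.det_one, mul_one, isUnit_iff_ne_zero]
    apply pow_ne_zero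
    exact Complex.ofReal_ne_zero.mpr (by linarith)
  · -- s > 0
    have hsne : (s : ℂ) ≠ 0 := by exact_mod_cast ne_of_gt h0
    have hx0 : 0 ≤ (μ + 1 - s) / s := by
      apply div_nonneg _ (le_of_lt h0)
      have := hs.2; linarith
    have hkey : Ps Φ s μ = (s : ℂ) • ((((μ + 1 - s) / s : ℝ) : ℂ) • 1 + Φ) := by
      rw [Ps_alt]
      rw [smul_add, smul_smul]
      rw [add_comm]
      congr 2
      push_cast
      rw [mul_div_cancel₀]
      exact_mod_cast ne_of_gt h0
    rw [hkey, Matrix.isUnit_iff_isUnit_det, Matrix.det_smul, isUnit_iff_ne_zero]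
    apply mul_ne_zero (pow_ne_zero _ hsne)
    exact (Matrix.isUnit_iff_isUnit_det _).mp (isUnit_shift Φ hspec hx0) |>.ne_zero


/-! ### Uniform resolvent bound -/

theorem continuous_Ps_prod : Continuous (fun p : ℝ × ℝ => Ps Φ p.1 p.2) := by
  unfold Ps
  exact ((Complex.continuous_ofReal.comp continuous_snd).smul continuous_const).add
    (continuous_const.add ((Complex.continuous_ofReal.comp continuous_fst).smul continuous_const))

theorem continuous_Ps_left (μ : ℝ) : Continuous (fun s : ℝ => Ps Φ s μ) :=
  (continuous_Ps_prod Φ).comp (continuous_id.prodMk continuous_const)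

theorem continuous_Ps_right (s : ℝ) : Continuous (fun μ : ℝ => Ps Φ s μ) :=
  (continuous_Ps_prod Φ).comp (continuous_const.prodMk continuous_id)

theorem exists_resolvent_bound [Nonempty n]
    (hu : ∀ s ∈ Icc (0:ℝ) 1, ∀ μ : ℝ, 0 ≤ μ → IsUnit (Ps Φ s μ)) :
    ∃ C : ℝ, 0 < C ∧ ∀ s ∈ Icc (0:ℝ) 1, ∀ μ : ℝ, 0 ≤ μ → ‖(Ps Φ s μ)⁻¹‖ ≤ C / (1 + μ) := by
  set c := (Fintype.card n : ℝ) with hcdef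
  have hc1 : (1:ℝ) ≤ c := Nat.one_le_cast.mpr Fintype.card_pos
  set μ₀ : ℝ := 3 + 3 * c * (‖Φ‖ + 1) with hμ₀def
  have hμ₀3 : 3 ≤ μ₀ := by
    have : 0 ≤ 3 * c * (‖Φ‖ + 1) := by positivity
    linarith
  -- compact part
  have hK : IsCompact (Icc (0:ℝ) 1 ×ˢ Icc (0:ℝ) μ₀) := isCompact_Icc.prod isCompact_Icc
  have hcont : ContinuousOn (fun p : ℝ × ℝ => (Ps Φ p.1 p.2)⁻¹) (Icc (0:ℝ) 1 ×ˢ Icc (0:ℝ) μ₀) := by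
    apply continuousOn_matrix_inv (continuous_Ps_prod Φ).continuousOn
    rintro ⟨s, μ⟩ ⟨hs, hμ⟩
    exact hu s hs μ hμ.1
  obtain ⟨C₀, hC₀⟩ := hK.exists_bound_of_continuousOn hcont
  have hmem : ((0:ℝ), (0:ℝ)) ∈ Icc (0:ℝ) 1 ×ˢ Icc (0:ℝ) μ₀ := by
    refine ⟨⟨le_refl _, zero_le_one⟩, ⟨le_refl _, ?_⟩⟩
    show (0:ℝ) ≤ μ₀
    linarith
  have hC₀0 : 0 ≤ C₀ := le_trans (norm_nonneg _) (hC₀ ⟨0, 0⟩ hmem)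
  refine ⟨max (C₀ * (1 + μ₀)) 4, lt_of_lt_of_le (by norm_num) (le_max_right _ _), ?_⟩
  intro s hs μ hμ
  rcases le_total μ μ₀ with hcase | hcase
  · -- compact regime
    have h1 : ‖(Ps Φ s μ)⁻¹‖ ≤ C₀ := hC₀ ⟨s, μ⟩ ⟨hs, ⟨hμ, hcase⟩⟩
    have h2 : C₀ ≤ C₀ * (1 + μ₀) / (1 + μ) := by
      rw [le_div_iff₀ (by linarith)]
      nlinarith [hC₀0, hcase]
    refine le_trans h1 (le_trans h2 ((div_le_div_iff_of_pos_right (by linarith)).mpr (le_max_left _ _)))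

  · -- tail regime
    have hs0 := hs.1
    have hs1 := hs.2
    have ha0 : (0:ℝ) < μ + 1 - s := by linarith
    have haμ : μ ≤ μ + 1 - s := by linarith
    set r : ℝ := s / (μ + 1 - s) with hrdef
    have hr0 : 0 ≤ r := div_nonneg hs0 ha0.le
    have hrμ : r ≤ 1 / μ := by
      rw [div_le_div_iff₀ ha0 (by linarith)]
      nlinarith
    set N : Matrix n n ℂ := ((r : ℝ) : ℂ) • Φ with hNdef
    have hNnorm : ‖N‖ ≤ ‖Φ‖ / μ := by
      rw [hNdef, norm_smul]
      have : ‖((r:ℝ):ℂ)‖ = r := by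
        rw [Complex.norm_real, Real.norm_eq_abs, abs_of_nonneg hr0]
      rw [this, div_eq_mul_inv, mul_comm ‖Φ‖]
      apply mul_le_mul _ (le_refl _) (norm_nonneg _) (by positivity)
      rw [← one_div]
      exact hrμ
    have hcN : c * ‖N‖ ≤ 1 / 2 := by
      have h3 : μ₀ ≤ μ := hcase
      have hμpos : (0:ℝ) < μ := by linarith
      have : c * ‖N‖ ≤ c * (‖Φ‖ / μ) := by
        apply mul_le_mul_of_nonneg_left hNnorm (by linarith)
      apply le_trans this
      rw [mul_div_assoc', div_le_iff₀ hμpos]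
      nlinarith [mul_nonneg (by linarith : (0:ℝ) ≤ c) (norm_nonneg Φ)]
    have hfact : Ps Φ s μ = (((μ + 1 - s : ℝ)) : ℂ) • (1 + N) := by
      rw [Ps_alt, hNdef, smul_add, smul_smul, add_comm]
      congr 2
      rw [hrdef]
      push_cast
      rw [mul_div_cancel₀]
      exact_mod_cast ne_of_gt ha0
    have hane : (((μ + 1 - s : ℝ)) : ℂ) ≠ 0 := Complex.ofReal_ne_zero.mpr (ne_of_gt ha0)
    have huPs : IsUnit (Ps Φ s μ) := hu s hs μ hμ
    have hu1N : IsUnit (1 + N) := by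
      rw [hfact, Matrix.isUnit_iff_isUnit_det, Matrix.det_smul, isUnit_iff_ne_zero, mul_ne_zero_iff] at huPs
      rw [Matrix.isUnit_iff_isUnit_det, isUnit_iff_ne_zero]
      exact huPs.2
    have hXid : (1 + N)⁻¹ = 1 - N * (1 + N)⁻¹ := by
      have h2 : (1 + N) * (1 + N)⁻¹ = 1 :=
        Matrix.mul_nonsing_inv _ ((Matrix.isUnit_iff_isUnit_det _).mp hu1N)
      rw [add_mul, one_mul] at h2
      exact eq_sub_of_add_eq h2
    have hXle : ‖(1 + N)⁻¹‖ ≤ 2 := by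
      have h4 : ‖(1 + N)⁻¹‖ ≤ 1 + c * ‖N‖ * ‖(1 + N)⁻¹‖ := by
        calc ‖(1 + N)⁻¹‖ = ‖(1:Matrix n n ℂ) - N * (1 + N)⁻¹‖ := by rw [← hXid]
          _ ≤ ‖(1:Matrix n n ℂ)‖ + ‖N * (1 + N)⁻¹‖ := norm_sub_le _ _
          _ ≤ 1 + c * ‖N‖ * ‖(1 + N)⁻¹‖ := by
              apply add_le_add norm_one_le
              exact norm_mul_le _ _
      nlinarith [norm_nonneg ((1 + N)⁻¹), hcN]
    have hinv : (Ps Φ s μ)⁻¹ = (((μ + 1 - s : ℝ)) : ℂ)⁻¹ • (1 + N)⁻¹ := by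
      rw [hfact, smul_inv_eq hane hu1N]
    have hfin : ‖(Ps Φ s μ)⁻¹‖ ≤ 2 / μ := by
      rw [hinv, norm_smul]
      have h5 : ‖(((μ + 1 - s : ℝ)) : ℂ)⁻¹‖ = (μ + 1 - s)⁻¹ := by
        rw [norm_inv, Complex.norm_real, Real.norm_eq_abs, abs_of_pos ha0]
      rw [h5]
      calc (μ + 1 - s)⁻¹ * ‖(1 + N)⁻¹‖ ≤ μ⁻¹ * 2 := by
            apply mul_le_mul _ hXle (norm_nonneg _) (by positivity)
            exact inv_anti₀ (by linarith) haμ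
        _ = 2 / μ := by rw [div_eq_mul_inv, mul_comm]
    have hμ3 : 3 ≤ μ := le_trans hμ₀3 hcase
    apply le_trans hfin
    have h6 : 2 / μ ≤ 4 / (1 + μ) := by
      rw [div_le_div_iff₀ (by linarith) (by linarith)]
      linarith
    exact le_trans h6 ((div_le_div_iff_of_pos_right (by linarith)).mpr (le_max_right _ _))



/-! ### Integrands -/

/-- The logarithm integrand along the path. -/
noncomputable def Hf (s μ : ℝ) : Matrix n n ℂ := (1 / (1 + (μ : ℂ))) • 1 - (Ps Φ s μ)⁻¹

/-- The `s`-derivative integrand. -/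
noncomputable def Kf (s μ : ℝ) : Matrix n n ℂ := (Ps Φ s μ)⁻¹ * (Φ - 1) * (Ps Φ s μ)⁻¹

theorem one_add_ne (μ : ℝ) (hμ : 0 ≤ μ) : (1 + (μ : ℂ)) ≠ 0 := by
  have h : ((1 + μ : ℝ) : ℂ) ≠ 0 := Complex.ofReal_ne_zero.mpr (by linarith)
  push_cast at h
  exact h

theorem norm_one_div_one_add (μ : ℝ) (hμ : 0 ≤ μ) : ‖1 / (1 + (μ : ℂ))‖ = (1 + μ)⁻¹ := by
  rw [norm_div, norm_one, one_div]
  congr 1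
  have : (1 + (μ : ℂ)) = ((1 + μ : ℝ) : ℂ) := by push_cast; ring
  rw [this, Complex.norm_real, Real.norm_eq_abs, abs_of_pos (by linarith)]

theorem Hf_eq (s μ : ℝ) (hPs : IsUnit (Ps Φ s μ)) (hμ : 0 ≤ μ) :
    ((s : ℂ) • (Φ - 1)) * ((1 / (1 + (μ : ℂ))) • (Ps Φ s μ)⁻¹) = Hf Φ s μ := by
  have hdet := (Matrix.isUnit_iff_isUnit_det _).mp hPs
  have hkey : (s : ℂ) • (Φ - 1) = Ps Φ s μ - ((μ : ℂ) + 1) • 1 := by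
    unfold Ps; module
  rw [mul_smul_comm, hkey, sub_mul, Matrix.mul_nonsing_inv _ hdet, smul_mul_assoc,
    smul_sub, smul_smul]
  unfold Hf
  rw [div_mul_eq_mul_div, one_mul]
  have h2 : (1 + (μ : ℂ)) / (1 + (μ : ℂ)) = 1 := div_self (one_add_ne μ hμ)
  have h3 : ((μ : ℂ) + 1) / (1 + (μ : ℂ)) = 1 := by rw [add_comm]; exact h2
  rw [h3, one_smul, one_mul]

/-! ### Integrability -/

theorem integrableOn_inv_sq : IntegrableOn (fun μ : ℝ => ((1 + μ)⁻¹) ^ 2) (Ici (0:ℝ)) := by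
  rw [integrableOn_Ici_iff_integrableOn_Ioi]
  have hderiv : ∀ x ∈ Ioi (0:ℝ), HasDerivAt (fun y : ℝ => -(1 + y)⁻¹) (((1 + x)⁻¹) ^ 2) x := by
    intro x hx
    have hx0 : (0:ℝ) < x := hx
    have h1 : HasDerivAt (fun y : ℝ => 1 + y) 1 x := (hasDerivAt_id x).const_add 1
    have h2 := (h1.inv (by linarith)).neg
    refine h2.congr_deriv ?_
    rw [neg_div, neg_neg, one_div, inv_pow]
  have hcont : ContinuousWithinAt (fun y : ℝ => -(1 + y)⁻¹) (Ici 0) 0 := by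
    apply ContinuousAt.continuousWithinAt
    exact (((continuous_const.add continuous_id).continuousAt).inv₀ (by norm_num)).neg
  have htend : Tendsto (fun y : ℝ => -(1 + y)⁻¹) atTop (𝓝 0) := by
    rw [show (0:ℝ) = -0 by norm_num]
    apply Tendsto.neg
    exact tendsto_inv_atTop_zero.comp (tendsto_atTop_add_const_left _ 1 tendsto_id)
  exact integrableOn_Ioi_deriv_of_nonneg hcont hderiv (fun x hx => by positivity) htend

theorem integrableOn_of_bound {f : ℝ → Matrix n n ℂ} (hcont : ContinuousOn f (Ici 0))
    (K : ℝ) (hb : ∀ μ : ℝ, 0 ≤ μ → ‖f μ‖ ≤ K * ((1 + μ)⁻¹) ^ 2) :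
    IntegrableOn f (Ici (0:ℝ)) := by
  apply Integrable.mono' (integrableOn_inv_sq.const_mul K)
    (hcont.aestronglyMeasurable measurableSet_Ici)
  exact (ae_restrict_mem measurableSet_Ici).mono (fun μ hμ => hb μ hμ)

/-! ### Multiplication as continuous linear maps -/

noncomputable def mulL (A : Matrix n n ℂ) : Matrix n n ℂ →L[ℝ] Matrix n n ℂ :=
  ⟨LinearMap.mulLeft ℝ A, continuous_const.matrix_mul continuous_id⟩

noncomputable def mulR (A : Matrix n n ℂ) : Matrix n n ℂ →L[ℝ] Matrix n n ℂ :=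
  ⟨LinearMap.mulRight ℝ A, continuous_id.matrix_mul continuous_const⟩

@[simp] theorem mulL_apply (A B : Matrix n n ℂ) : mulL A B = A * B := rfl
@[simp] theorem mulR_apply (A B : Matrix n n ℂ) : mulR A B = B * A := rfl

theorem mul_integral {f : ℝ → Matrix n n ℂ} {ν : Measure ℝ} (A : Matrix n n ℂ)
    (hf : Integrable f ν) : A * (∫ x, f x ∂ν) = ∫ x, A * f x ∂ν := by
  simpa using (ContinuousLinearMap.integral_comp_comm (mulL A) hf).symm

theorem integral_mul {f : ℝ → Matrix n n ℂ} {ν : Measure ℝ} (A : Matrix n n ℂ)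
    (hf : Integrable f ν) : (∫ x, f x ∂ν) * A = ∫ x, f x * A ∂ν := by
  simpa using (ContinuousLinearMap.integral_comp_comm (mulR A) hf).symm

theorem commute_integral {f : ℝ → Matrix n n ℂ} {ν : Measure ℝ} {A : Matrix n n ℂ}
    (h : ∀ x, Commute A (f x)) : Commute A (∫ x, f x ∂ν) := by
  by_cases hf : Integrable f ν
  · show A * _ = _ * A
    rw [mul_integral A hf, integral_mul A hf]
    congr 1
    funext x
    exact h x
  · rw [integral_undef hf]
    exact Commute.zero_right A


/-! ### Difference identities and derivatives of the resolvent -/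

theorem inv_sub_inv {A B : Matrix n n ℂ} (hA : IsUnit A) (hB : IsUnit B) :
    A⁻¹ - B⁻¹ = A⁻¹ * (B - A) * B⁻¹ := by
  rw [Matrix.mul_sub, Matrix.sub_mul, mul_assoc,
    Matrix.mul_nonsing_inv B ((Matrix.isUnit_iff_isUnit_det B).mp hB), mul_one,
    Matrix.nonsing_inv_mul A ((Matrix.isUnit_iff_isUnit_det A).mp hA), one_mul]

theorem mul_smul_mul (z : ℂ) (A M B : Matrix n n ℂ) : A * (z • M) * B = z • (A * M * B) := by
  rw [mul_smul_comm, smul_mul_assoc]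

theorem Ps_sub_Ps_mu (s y x : ℝ) : Ps Φ s y - Ps Φ s x = (((y - x : ℝ)) : ℂ) • 1 := by
  unfold Ps; push_cast; module

theorem Ps_sub_Ps_s (y x μ : ℝ) : Ps Φ y μ - Ps Φ x μ = (((y - x : ℝ)) : ℂ) • (Φ - 1) := by
  unfold Ps; push_cast; module

theorem smul_cancel_real {y x : ℝ} (h : y ≠ x) (M : Matrix n n ℂ) :
    (y - x)⁻¹ • ((((y - x : ℝ)) : ℂ) • M) = M := by
  rw [← Complex.coe_smul, smul_smul]
  norm_cast
  rw [inv_mul_cancel₀ (sub_ne_zero.mpr h), one_smul]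

/-- Two-sided derivative of `μ ↦ -(Ps Φ s μ)⁻¹` at interior points `x > 0`. -/
theorem hasDerivAt_neg_inv_mu {s : ℝ}
    (hus : ∀ μ : ℝ, 0 ≤ μ → IsUnit (Ps Φ s μ)) {x : ℝ} (hx : 0 < x) :
    HasDerivAt (fun μ => -(Ps Φ s μ)⁻¹) ((Ps Φ s x)⁻¹ * (Ps Φ s x)⁻¹) x := by
  rw [hasDerivAt_iff_tendsto_slope]
  have hev : slope (fun μ => -(Ps Φ s μ)⁻¹) x
      =ᶠ[𝓝[≠] x] (fun y => (Ps Φ s x)⁻¹ * (Ps Φ s y)⁻¹) := by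
    have hmem : Ioi (0:ℝ) ∩ {x}ᶜ ∈ 𝓝[≠] x :=
      inter_mem (nhdsWithin_le_nhds (Ioi_mem_nhds hx)) self_mem_nhdsWithin
    filter_upwards [hmem] with y hy
    obtain ⟨hy0, hyx⟩ := hy
    have hyx' : y ≠ x := hyx
    rw [slope_def_module]
    have h1 : -(Ps Φ s y)⁻¹ - -(Ps Φ s x)⁻¹ = (Ps Φ s x)⁻¹ - (Ps Φ s y)⁻¹ := by abel
    rw [h1, inv_sub_inv (hus x hx.le) (hus y (le_of_lt hy0)), Ps_sub_Ps_mu]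
    rw [mul_smul_mul, mul_one, smul_cancel_real hyx']
  apply Tendsto.congr' hev.symm
  have hcont : ContinuousAt (fun y => (Ps Φ s x)⁻¹ * (Ps Φ s y)⁻¹) x := by
    apply ContinuousAt.mul continuousAt_const
    exact continuousAt_matrix_inv (continuous_Ps_right Φ s).continuousAt (hus x hx.le)
  exact hcont.continuousWithinAt.tendsto

/-- One-sided (within `Icc 0 1`) derivative of `s ↦ (Ps Φ s μ)⁻¹`. -/
theorem hasDerivWithinAt_inv_s
    (hu : ∀ s ∈ Icc (0:ℝ) 1, ∀ μ : ℝ, 0 ≤ μ → IsUnit (Ps Φ s μ))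
    {s μ : ℝ} (hs : s ∈ Icc (0:ℝ) 1) (hμ : 0 ≤ μ) :
    HasDerivWithinAt (fun σ => (Ps Φ σ μ)⁻¹) (-(Kf Φ s μ)) (Icc 0 1) s := by
  rw [hasDerivWithinAt_iff_tendsto_slope]
  have hev : slope (fun σ => (Ps Φ σ μ)⁻¹) s
      =ᶠ[𝓝[Icc (0:ℝ) 1 \ {s}] s] (fun y => -((Ps Φ y μ)⁻¹ * (Φ - 1) * (Ps Φ s μ)⁻¹)) := by
    filter_upwards [self_mem_nhdsWithin] with y hy
    obtain ⟨hy01, hys⟩ := hy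
    have hys' : y ≠ s := hys
    rw [slope_def_module]
    rw [inv_sub_inv (hu y hy01 μ hμ) (hu s hs μ hμ), Ps_sub_Ps_s]
    have h4 : (((s - y : ℝ)) : ℂ) • (Φ - 1) = -((((y - s : ℝ)) : ℂ) • (Φ - 1)) := by
      push_cast; module
    rw [h4, Matrix.mul_neg, Matrix.neg_mul, mul_smul_mul, smul_neg, smul_cancel_real hys']
  apply Tendsto.congr' hev.symm
  have hcont : ContinuousWithinAt (fun y => -((Ps Φ y μ)⁻¹ * (Φ - 1) * (Ps Φ s μ)⁻¹))
      (Icc (0:ℝ) 1 \ {s}) s := by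
    apply ContinuousWithinAt.neg
    apply ContinuousWithinAt.mul _ continuousWithinAt_const
    apply ContinuousWithinAt.mul _ continuousWithinAt_const
    have := (continuousOn_matrix_inv (continuous_Ps_left Φ μ).continuousOn
      (fun y hy => hu y hy μ hμ)) s hs
    exact this.mono diff_subset
  have hKf : -((Ps Φ s μ)⁻¹ * (Φ - 1) * (Ps Φ s μ)⁻¹) = -(Kf Φ s μ) := rfl
  rw [← hKf]
  exact hcont.tendsto


/-! ### The smooth reparametrization -/

noncomputable def sig (t : ℝ) : ℝ := 3 * t ^ 2 - 2 * t ^ 3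

theorem sig_zero : sig 0 = 0 := by norm_num [sig]

theorem sig_one : sig 1 = 1 := by norm_num [sig]

theorem continuous_sig : Continuous sig := by
  unfold sig; fun_prop

theorem hasDerivAt_sig (t : ℝ) : HasDerivAt sig (6 * t - 6 * t ^ 2) t := by
  have h1 := ((hasDerivAt_pow 2 t).const_mul (3:ℝ)).sub ((hasDerivAt_pow 3 t).const_mul (2:ℝ))
  refine h1.congr_deriv ?_
  push_cast
  ring

theorem sig_mem {t : ℝ} (h1 : -(1/2 : ℝ) ≤ t) (h2 : t ≤ 3/2) : sig t ∈ Icc (0:ℝ) 1 := by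
  unfold sig
  constructor
  · nlinarith [sq_nonneg t]
  · nlinarith [sq_nonneg (1 - t)]

theorem tendsto_sig {t : ℝ} (ht : t ∈ Ioo (-(1/2 : ℝ)) (3/2)) :
    Tendsto sig (𝓝 t) (𝓝[Icc (0:ℝ) 1] (sig t)) := by
  rw [tendsto_nhdsWithin_iff]
  refine ⟨continuous_sig.continuousAt, ?_⟩
  filter_upwards [Ioo_mem_nhds ht.1 ht.2] with y hy
  exact sig_mem hy.1.le hy.2.le

theorem sig_deriv_abs_le {t : ℝ} (ht : t ∈ Ioo (-(1/2 : ℝ)) (3/2)) :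
    |6 * t - 6 * t ^ 2| ≤ 14 := by
  rw [abs_le]
  constructor <;> nlinarith [ht.1, ht.2]

theorem hasDerivAt_inv_sig
    (hu : ∀ s ∈ Icc (0:ℝ) 1, ∀ μ : ℝ, 0 ≤ μ → IsUnit (Ps Φ s μ))
    {μ : ℝ} (hμ : 0 ≤ μ) {t : ℝ} (ht : t ∈ Ioo (-(1/2 : ℝ)) (3/2)) :
    HasDerivAt (fun τ => (Ps Φ (sig τ) μ)⁻¹) ((6 * t - 6 * t ^ 2) • -(Kf Φ (sig t) μ)) t := by
  have hst : sig t ∈ Icc (0:ℝ) 1 := sig_mem ht.1.le ht.2.le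
  have hg := hasDerivWithinAt_inv_s Φ hu hst hμ
  exact HasDerivAtFilter.scomp hg (hasDerivAt_sig t) ((tendsto_sig ht).prodMap (tendsto_pure_pure _ _))

/-- Pointwise `t`-derivative of the integrand. -/
theorem hasDerivAt_Hf_sig
    (hu : ∀ s ∈ Icc (0:ℝ) 1, ∀ μ : ℝ, 0 ≤ μ → IsUnit (Ps Φ s μ))
    {μ : ℝ} (hμ : 0 ≤ μ) {t : ℝ} (ht : t ∈ Ioo (-(1/2 : ℝ)) (3/2)) :
    HasDerivAt (fun τ => Hf Φ (sig τ) μ) ((6 * t - 6 * t ^ 2) • Kf Φ (sig t) μ) t := by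
  have hcomp := hasDerivAt_inv_sig Φ hu hμ ht
  have h2 := hcomp.const_sub ((1 / (1 + (μ : ℂ))) • (1 : Matrix n n ℂ))
  have h3 : -((6 * t - 6 * t ^ 2) • -(Kf Φ (sig t) μ)) = (6 * t - 6 * t ^ 2) • Kf Φ (sig t) μ := by
    rw [smul_neg, neg_neg]
  rw [h3] at h2
  exact h2

/-! ### The resolvent-square integral -/

theorem integral_PinvSq {s : ℝ} (hs : s ∈ Icc (0:ℝ) 1) {C : ℝ}
    (hus : ∀ μ : ℝ, 0 ≤ μ → IsUnit (Ps Φ s μ))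
    (hCs : ∀ μ : ℝ, 0 ≤ μ → ‖(Ps Φ s μ)⁻¹‖ ≤ C / (1 + μ))
    (hint : IntegrableOn (fun μ => (Ps Φ s μ)⁻¹ * (Ps Φ s μ)⁻¹) (Ici (0:ℝ))) :
    ∫ μ in Ici (0:ℝ), (Ps Φ s μ)⁻¹ * (Ps Φ s μ)⁻¹ = (Ps Φ s 0)⁻¹ := by
  have hcont : ContinuousOn (fun μ => (Ps Φ s μ)⁻¹) (Ici (0:ℝ)) :=
    continuousOn_matrix_inv (continuous_Ps_right Φ s).continuousOn (fun μ hμ => hus μ hμ)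
  have key : ∀ R : ℝ, 0 ≤ R → ∫ μ in (0:ℝ)..R, (Ps Φ s μ)⁻¹ * (Ps Φ s μ)⁻¹
      = (Ps Φ s 0)⁻¹ - (Ps Φ s R)⁻¹ := by
    intro R hR
    have hii : IntervalIntegrable (fun μ => (Ps Φ s μ)⁻¹ * (Ps Φ s μ)⁻¹) volume 0 R := by
      apply IntegrableOn.intervalIntegrable
      apply hint.mono_set
      intro x hx
      rw [Set.uIcc_of_le hR] at hx
      exact hx.1
    have heq := intervalIntegral.integral_eq_sub_of_hasDeriv_right_of_le hR
      ((hcont.mono (Icc_subset_Ici_self)).neg)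
      (fun x hx => (hasDerivAt_neg_inv_mu Φ hus hx.1).hasDerivWithinAt)
      hii
    rw [heq, Pi.neg_apply, Pi.neg_apply]
    abel
  rw [integral_Ici_eq_integral_Ioi]
  have h1 : Tendsto (fun R => ∫ μ in (0:ℝ)..R, (Ps Φ s μ)⁻¹ * (Ps Φ s μ)⁻¹) atTop
      (𝓝 (∫ μ in Ioi (0:ℝ), (Ps Φ s μ)⁻¹ * (Ps Φ s μ)⁻¹)) :=
    intervalIntegral_tendsto_integral_Ioi 0 (hint.mono_set Ioi_subset_Ici_self) tendsto_id
  have htail : Tendsto (fun R => (Ps Φ s R)⁻¹) atTop (𝓝 0) := by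
    have hdiv : Tendsto (fun R : ℝ => C / (1 + R)) atTop (𝓝 0) :=
      Tendsto.div_atTop tendsto_const_nhds (tendsto_atTop_add_const_left _ 1 tendsto_id)
    apply squeeze_zero_norm' _ hdiv
    filter_upwards [eventually_ge_atTop (0:ℝ)] with R hR
    exact hCs R hR
  have h2 : Tendsto (fun R : ℝ => (Ps Φ s 0)⁻¹ - (Ps Φ s R)⁻¹) atTop (𝓝 ((Ps Φ s 0)⁻¹)) := by
    simpa using (tendsto_const_nhds.sub htail :
      Tendsto (fun R : ℝ => (Ps Φ s 0)⁻¹ - (Ps Φ s R)⁻¹) atTop (𝓝 ((Ps Φ s 0)⁻¹ - 0)))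
  have h3 : Tendsto (fun R => ∫ μ in (0:ℝ)..R, (Ps Φ s μ)⁻¹ * (Ps Φ s μ)⁻¹) atTop
      (𝓝 ((Ps Φ s 0)⁻¹)) := by
    apply h2.congr'
    filter_upwards [eventually_ge_atTop (0:ℝ)] with R hR
    exact (key R hR).symm
  exact tendsto_nhds_unique h1 h3


/-! ### Derivative of exp along a path vanishing at the point -/

open NormedSpace in
theorem hasDerivAt_exp_of_zero [Nonempty n] {c : ℝ → Matrix n n ℂ} {d : Matrix n n ℂ} {t₀ : ℝ}
    (hc : HasDerivAt c d t₀) (h0 : c t₀ = 0) :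
    HasDerivAt (fun t => exp (c t)) d t₀ := by
  rw [hasDerivAt_iff_isLittleO]
  set K : ℝ := (Fintype.card n : ℝ) * ∑' k : ℕ, (Fintype.card n : ℝ) ^ k / (Nat.factorial k)
    with hK
  have h2 : (fun t => c t - c t₀ - (t - t₀) • d) =o[𝓝 t₀] (fun t => t - t₀) :=
    hasDerivAt_iff_isLittleO.mp hc
  have hbigO : (fun t => c t - c t₀) =O[𝓝 t₀] (fun t => t - t₀) := hc.isBigO_sub
  have hsmall : ∀ᶠ t in 𝓝 t₀, ‖c t‖ ≤ 1 := by
    have htd : Tendsto c (𝓝 t₀) (𝓝 0) := by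
      have := hc.continuousAt.tendsto
      rwa [h0] at this
    have hball : Metric.closedBall (0 : Matrix n n ℂ) 1 ∈ 𝓝 (0 : Matrix n n ℂ) :=
      Metric.closedBall_mem_nhds _ one_pos
    filter_upwards [htd hball] with t ht
    simpa [Metric.mem_closedBall, dist_zero_right] using ht
  have h1 : (fun t => exp (c t) - 1 - c t) =O[𝓝 t₀] (fun t => ‖c t‖ * ‖c t‖) := by
    apply Asymptotics.IsBigO.of_bound K
    filter_upwards [hsmall] with t ht
    have := exp_quadratic (X := c t) ht
    rw [← hK, pow_two] at this
    calc ‖exp (c t) - 1 - c t‖ ≤ K * (‖c t‖ * ‖c t‖) := this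
      _ ≤ K * ‖‖c t‖ * ‖c t‖‖ := by
          rw [Real.norm_eq_abs, abs_of_nonneg (by positivity)]
  have hnormO : (fun t => ‖c t‖ * ‖c t‖) =O[𝓝 t₀] (fun t => (t - t₀) * (t - t₀)) := by
    have hb : (fun t => ‖c t - c t₀‖) =O[𝓝 t₀] (fun t => t - t₀) := hbigO.norm_left
    have hb' : (fun t => ‖c t‖) =O[𝓝 t₀] (fun t => t - t₀) := by
      apply hb.congr' _ EventuallyEq.rfl
      filter_upwards with t
      rw [h0, sub_zero]
    exact hb'.mul hb'
  have hsq : (fun t : ℝ => (t - t₀) * (t - t₀)) =o[𝓝 t₀] (fun t => t - t₀) := by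
    have hz : (fun t : ℝ => t - t₀) =o[𝓝 t₀] (fun _ => (1:ℝ)) := by
      rw [Asymptotics.isLittleO_one_iff]
      have : Tendsto (fun t : ℝ => t - t₀) (𝓝 t₀) (𝓝 (t₀ - t₀)) :=
        tendsto_id.sub tendsto_const_nhds
      simpa using this
    have := hz.mul_isBigO (Asymptotics.isBigO_refl (fun t : ℝ => t - t₀) (𝓝 t₀))
    simpa using this
  have h1' : (fun t => exp (c t) - 1 - c t) =o[𝓝 t₀] (fun t => t - t₀) :=
    h1.trans_isLittleO (hnormO.trans_isLittleO hsq)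
  have hxp : ∀ t, exp (c t) - exp (c t₀) - (t - t₀) • d
      = (exp (c t) - 1 - c t) + (c t - c t₀ - (t - t₀) • d) := by
    intro t
    rw [h0, exp_zero]
    abel
  exact ((h1'.add h2).congr' (Eventually.of_forall fun t => (hxp t).symm) EventuallyEq.rfl)

/-! ### Product rule for matrix-valued functions -/

noncomputable def mulCLM : Matrix n n ℂ →L[ℝ] Matrix n n ℂ →L[ℝ] Matrix n n ℂ :=
  LinearMap.mkContinuous₂ (LinearMap.mul ℝ (Matrix n n ℂ)) (Fintype.card n)
    (fun A B => by simpa using norm_mul_le A B)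

@[simp] theorem mulCLM_apply (A B : Matrix n n ℂ) : mulCLM A B = A * B := rfl

theorem matmul_deriv {u v : ℝ → Matrix n n ℂ} {u' v' : Matrix n n ℂ} {t : ℝ}
    (hu : HasDerivAt u u' t) (hv : HasDerivAt v v' t) :
    HasDerivAt (fun t => u t * v t) (u' * v t + u t * v') t := by
  have h1 : HasDerivAt (mulCLM ∘ u) (mulCLM u') t :=
    (ContinuousLinearMap.hasFDerivAt mulCLM).comp_hasDerivAt t hu
  have h2 : HasDerivAt (fun t => mulCLM (u t)) (mulCLM u') t := h1
  have := h2.clm_apply hv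
  simpa using this

/-! ### Commutation with inverses (unconditional) -/

theorem commute_inv_all {A B : Matrix n n ℂ} (h : Commute A B) : Commute A B⁻¹ := by
  by_cases hB : IsUnit B.det
  · exact commute_matrix_inv_right h ((Matrix.isUnit_iff_isUnit_det B).mpr hB)
  · rw [Matrix.nonsing_inv_apply_not_isUnit B hB]
    exact Commute.zero_right A

theorem commute_inv_inv {A B : Matrix n n ℂ} (h : Commute A B) : Commute A⁻¹ B⁻¹ :=
  (commute_inv_all (commute_inv_all h).symm).symm

theorem commute_Hf_Hf (s μ s' ν : ℝ) : Commute (Hf Φ s μ) (Hf Φ s' ν) := by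
  unfold Hf
  refine Commute.sub_left (Commute.sub_right ?_ ?_) (Commute.sub_right ?_ ?_)
  · exact ((Commute.one_left _).smul_left _).smul_right _
  · exact (Commute.one_left _).smul_left _
  · exact (Commute.one_right _).smul_right _
  · exact commute_inv_inv (commute_Ps_Ps Φ s μ s' ν)

theorem commute_Phi_Hf (s μ : ℝ) : Commute Φ (Hf Φ s μ) := by
  unfold Hf
  apply Commute.sub_right
  · exact (Commute.one_right Φ).smul_right _
  · exact commute_inv_all (commute_Phi_Ps Φ s μ)

theorem Hf_zero_of_nonneg {μ : ℝ} (hμ : 0 ≤ μ) : Hf Φ 0 μ = 0 := by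
  unfold Hf
  rw [Ps_zero_left, smul_inv_eq (Complex.ofReal_ne_zero.mpr (by linarith)) isUnit_one,
    inv_one]
  have hcoef : (1 / (1 + (μ : ℂ))) = (((μ + 1 : ℝ)) : ℂ)⁻¹ := by
    push_cast
    rw [one_div, add_comm]
  rw [hcoef, sub_self]


/-! ### Continuity and integrability packages -/

theorem Ps_one (μ : ℝ) : Ps Φ 1 μ = (μ : ℂ) • 1 + Φ := by
  unfold Ps; push_cast; module

theorem contOn_coef : ContinuousOn (fun μ : ℝ => 1 / (1 + (μ:ℂ))) (Ici (0:ℝ)) := by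
  apply ContinuousOn.div continuousOn_const
  · exact (continuous_const.add Complex.continuous_ofReal).continuousOn
  · exact fun μ hμ => one_add_ne μ hμ

theorem contOn_inv_mu
    (hu : ∀ s ∈ Icc (0:ℝ) 1, ∀ μ : ℝ, 0 ≤ μ → IsUnit (Ps Φ s μ))
    {s : ℝ} (hs : s ∈ Icc (0:ℝ) 1) :
    ContinuousOn (fun μ => (Ps Φ s μ)⁻¹) (Ici (0:ℝ)) :=
  continuousOn_matrix_inv (continuous_Ps_right Φ s).continuousOn (fun μ hμ => hu s hs μ hμ)

theorem contOn_Hf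
    (hu : ∀ s ∈ Icc (0:ℝ) 1, ∀ μ : ℝ, 0 ≤ μ → IsUnit (Ps Φ s μ))
    {s : ℝ} (hs : s ∈ Icc (0:ℝ) 1) :
    ContinuousOn (fun μ => Hf Φ s μ) (Ici (0:ℝ)) :=
  ((contOn_coef).smul continuousOn_const).sub (contOn_inv_mu Φ hu hs)

theorem contOn_Kf
    (hu : ∀ s ∈ Icc (0:ℝ) 1, ∀ μ : ℝ, 0 ≤ μ → IsUnit (Ps Φ s μ))
    {s : ℝ} (hs : s ∈ Icc (0:ℝ) 1) :
    ContinuousOn (fun μ => Kf Φ s μ) (Ici (0:ℝ)) :=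
  ((contOn_inv_mu Φ hu hs).mul continuousOn_const).mul (contOn_inv_mu Φ hu hs)

theorem norm_smul_coe (s : ℝ) (M : Matrix n n ℂ) : ‖((s:ℝ):ℂ) • M‖ = |s| * ‖M‖ := by
  rw [norm_smul, Complex.norm_real, Real.norm_eq_abs]

section Bounds

variable [Nonempty n] {C : ℝ}

theorem norm_Hf_le (hC0 : 0 < C)
    (hu : ∀ s ∈ Icc (0:ℝ) 1, ∀ μ : ℝ, 0 ≤ μ → IsUnit (Ps Φ s μ))
    (hC : ∀ s ∈ Icc (0:ℝ) 1, ∀ μ : ℝ, 0 ≤ μ → ‖(Ps Φ s μ)⁻¹‖ ≤ C / (1 + μ))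
    {s : ℝ} (hs : s ∈ Icc (0:ℝ) 1) {μ : ℝ} (hμ : 0 ≤ μ) :
    ‖Hf Φ s μ‖ ≤ ((Fintype.card n : ℝ) * ‖Φ - 1‖ * C) * ((1 + μ)⁻¹) ^ 2 := by
  have hc0 : (0:ℝ) < (Fintype.card n : ℝ) := by exact_mod_cast Fintype.card_pos
  set c := (Fintype.card n : ℝ)
  rw [← Hf_eq Φ s μ (hu s hs μ hμ) hμ]
  calc ‖((s : ℂ) • (Φ - 1)) * ((1 / (1 + (μ : ℂ))) • (Ps Φ s μ)⁻¹)‖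
      ≤ c * ‖(s : ℂ) • (Φ - 1)‖ * ‖(1 / (1 + (μ : ℂ))) • (Ps Φ s μ)⁻¹‖ := norm_mul_le _ _
    _ ≤ c * ‖Φ - 1‖ * ((1 + μ)⁻¹ * (C / (1 + μ))) := by
        apply mul_le_mul
        · apply mul_le_mul_of_nonneg_left _ hc0.le
          rw [norm_smul_coe]
          have : |s| ≤ 1 := by rw [abs_le]; exact ⟨by linarith [hs.1], hs.2⟩
          nlinarith [norm_nonneg (Φ - 1)]
        · rw [norm_smul, norm_one_div_one_add μ hμ]
          exact mul_le_mul_of_nonneg_left (hC s hs μ hμ) (by positivity)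
        · positivity
        · positivity
    _ = (c * ‖Φ - 1‖ * C) * ((1 + μ)⁻¹) ^ 2 := by
        rw [div_eq_mul_inv]; ring
  
theorem norm_Kf_le (hC0 : 0 < C)
    (hC : ∀ s ∈ Icc (0:ℝ) 1, ∀ μ : ℝ, 0 ≤ μ → ‖(Ps Φ s μ)⁻¹‖ ≤ C / (1 + μ))
    {s : ℝ} (hs : s ∈ Icc (0:ℝ) 1) {μ : ℝ} (hμ : 0 ≤ μ) :
    ‖Kf Φ s μ‖ ≤ ((Fintype.card n : ℝ) ^ 2 * ‖Φ - 1‖ * C ^ 2) * ((1 + μ)⁻¹) ^ 2 := by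
  have hc0 : (0:ℝ) < (Fintype.card n : ℝ) := by exact_mod_cast Fintype.card_pos
  set c := (Fintype.card n : ℝ)
  have hP := hC s hs μ hμ
  have h1μ : (0:ℝ) < 1 + μ := by linarith
  have hPnn : (0:ℝ) ≤ ‖(Ps Φ s μ)⁻¹‖ := norm_nonneg _
  calc ‖(Ps Φ s μ)⁻¹ * (Φ - 1) * (Ps Φ s μ)⁻¹‖
      ≤ c * ‖(Ps Φ s μ)⁻¹ * (Φ - 1)‖ * ‖(Ps Φ s μ)⁻¹‖ := norm_mul_le _ _
    _ ≤ c * (c * ‖(Ps Φ s μ)⁻¹‖ * ‖Φ - 1‖) * ‖(Ps Φ s μ)⁻¹‖ := by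
        apply mul_le_mul_of_nonneg_right _ hPnn
        exact mul_le_mul_of_nonneg_left (norm_mul_le _ _) hc0.le
    _ ≤ c * (c * (C / (1 + μ)) * ‖Φ - 1‖) * (C / (1 + μ)) := by
        have hq : (0:ℝ) ≤ C / (1 + μ) := div_nonneg hC0.le (by linarith)
        apply mul_le_mul _ hP hPnn
          (mul_nonneg hc0.le (mul_nonneg (mul_nonneg hc0.le hq) (norm_nonneg _)))
        apply mul_le_mul_of_nonneg_left _ hc0.le
        apply mul_le_mul_of_nonneg_right _ (norm_nonneg _)
        exact mul_le_mul_of_nonneg_left hP hc0.le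
    _ = (c ^ 2 * ‖Φ - 1‖ * C ^ 2) * ((1 + μ)⁻¹) ^ 2 := by
        simp only [div_eq_mul_inv]; ring

theorem int_Hf (hC0 : 0 < C)
    (hu : ∀ s ∈ Icc (0:ℝ) 1, ∀ μ : ℝ, 0 ≤ μ → IsUnit (Ps Φ s μ))
    (hC : ∀ s ∈ Icc (0:ℝ) 1, ∀ μ : ℝ, 0 ≤ μ → ‖(Ps Φ s μ)⁻¹‖ ≤ C / (1 + μ))
    {s : ℝ} (hs : s ∈ Icc (0:ℝ) 1) :
    IntegrableOn (fun μ => Hf Φ s μ) (Ici (0:ℝ)) :=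
  integrableOn_of_bound (contOn_Hf Φ hu hs) _ (fun μ hμ => norm_Hf_le Φ hC0 hu hC hs hμ)

theorem int_Kf (hC0 : 0 < C)
    (hu : ∀ s ∈ Icc (0:ℝ) 1, ∀ μ : ℝ, 0 ≤ μ → IsUnit (Ps Φ s μ))
    (hC : ∀ s ∈ Icc (0:ℝ) 1, ∀ μ : ℝ, 0 ≤ μ → ‖(Ps Φ s μ)⁻¹‖ ≤ C / (1 + μ))
    {s : ℝ} (hs : s ∈ Icc (0:ℝ) 1) :
    IntegrableOn (fun μ => Kf Φ s μ) (Ici (0:ℝ)) :=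
  integrableOn_of_bound (contOn_Kf Φ hu hs) _ (fun μ hμ => norm_Kf_le Φ hC0 hC hs hμ)

theorem int_PinvSq (hC0 : 0 < C)
    (hu : ∀ s ∈ Icc (0:ℝ) 1, ∀ μ : ℝ, 0 ≤ μ → IsUnit (Ps Φ s μ))
    (hC : ∀ s ∈ Icc (0:ℝ) 1, ∀ μ : ℝ, 0 ≤ μ → ‖(Ps Φ s μ)⁻¹‖ ≤ C / (1 + μ))
    {s : ℝ} (hs : s ∈ Icc (0:ℝ) 1) :
    IntegrableOn (fun μ => (Ps Φ s μ)⁻¹ * (Ps Φ s μ)⁻¹) (Ici (0:ℝ)) := by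
  apply integrableOn_of_bound ((contOn_inv_mu Φ hu hs).mul (contOn_inv_mu Φ hu hs))
    ((Fintype.card n : ℝ) * C ^ 2)
  intro μ hμ
  have hc0 : (0:ℝ) < (Fintype.card n : ℝ) := by exact_mod_cast Fintype.card_pos
  set c := (Fintype.card n : ℝ)
  have hP := hC s hs μ hμ
  have h1μ : (0:ℝ) < 1 + μ := by linarith
  calc ‖(Ps Φ s μ)⁻¹ * (Ps Φ s μ)⁻¹‖ ≤ c * ‖(Ps Φ s μ)⁻¹‖ * ‖(Ps Φ s μ)⁻¹‖ := norm_mul_le _ _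
    _ ≤ c * (C / (1 + μ)) * (C / (1 + μ)) := by
        apply mul_le_mul _ hP (norm_nonneg _) (by positivity)
        exact mul_le_mul_of_nonneg_left hP hc0.le
    _ = c * C ^ 2 * ((1 + μ)⁻¹) ^ 2 := by
        simp only [div_eq_mul_inv]; ring

theorem int_g (hC0 : 0 < C)
    (hu : ∀ s ∈ Icc (0:ℝ) 1, ∀ μ : ℝ, 0 ≤ μ → IsUnit (Ps Φ s μ))
    (hC : ∀ s ∈ Icc (0:ℝ) 1, ∀ μ : ℝ, 0 ≤ μ → ‖(Ps Φ s μ)⁻¹‖ ≤ C / (1 + μ))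
    {s : ℝ} (hs : s ∈ Icc (0:ℝ) 1) :
    IntegrableOn (fun μ : ℝ => (1 / (1 + (μ:ℂ))) • (Ps Φ s μ)⁻¹) (Ici (0:ℝ)) := by
  apply integrableOn_of_bound (contOn_coef.smul (contOn_inv_mu Φ hu hs)) C
  intro μ hμ
  have h1μ : (0:ℝ) < 1 + μ := by linarith
  show ‖(1 / (1 + (μ:ℂ))) • (Ps Φ s μ)⁻¹‖ ≤ _
  rw [norm_smul, norm_one_div_one_add μ hμ]
  calc (1 + μ)⁻¹ * ‖(Ps Φ s μ)⁻¹‖ ≤ (1 + μ)⁻¹ * (C / (1 + μ)) :=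
        mul_le_mul_of_nonneg_left (hC s hs μ hμ) (by positivity)
    _ = C * ((1 + μ)⁻¹) ^ 2 := by simp only [div_eq_mul_inv]; ring

theorem integral_Kf_eq (hC0 : 0 < C)
    (hu : ∀ s ∈ Icc (0:ℝ) 1, ∀ μ : ℝ, 0 ≤ μ → IsUnit (Ps Φ s μ))
    (hC : ∀ s ∈ Icc (0:ℝ) 1, ∀ μ : ℝ, 0 ≤ μ → ‖(Ps Φ s μ)⁻¹‖ ≤ C / (1 + μ))
    {s : ℝ} (hs : s ∈ Icc (0:ℝ) 1) :
    ∫ μ in Ici (0:ℝ), Kf Φ s μ = (Φ - 1) * (Ps Φ s 0)⁻¹ := by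
  have hKeq : ∀ μ : ℝ, Kf Φ s μ = (Φ - 1) * ((Ps Φ s μ)⁻¹ * (Ps Φ s μ)⁻¹) := by
    intro μ
    have hcm : Commute (Φ - 1) (Ps Φ s μ)⁻¹ :=
      commute_inv_all ((commute_Phi_Ps Φ s μ).sub_left (Commute.one_left _))
    unfold Kf
    rw [← mul_assoc, ← hcm.eq, mul_assoc]
  rw [show (fun μ => Kf Φ s μ) = fun μ => (Φ - 1) * ((Ps Φ s μ)⁻¹ * (Ps Φ s μ)⁻¹) from
    funext hKeq]
  rw [← mul_integral _ (int_PinvSq Φ hC0 hu hC hs)]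
  rw [integral_PinvSq Φ hs (fun μ hμ => hu s hs μ hμ) (fun μ hμ => hC s hs μ hμ)
    (int_PinvSq Φ hC0 hu hC hs)]


theorem hball_Ioo {t₀ : ℝ} (ht₀ : t₀ ∈ Icc (0:ℝ) 1) :
    ∀ t ∈ Metric.ball t₀ (1/2 : ℝ), t ∈ Ioo (-(1/2 : ℝ)) (3/2) := by
  intro t ht
  rw [Metric.mem_ball, Real.dist_eq] at ht
  obtain ⟨h1, h2⟩ := abs_lt.mp ht
  exact ⟨by linarith [ht₀.1], by linarith [ht₀.2]⟩

theorem hasDerivAt_B (hC0 : 0 < C)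
    (hu : ∀ s ∈ Icc (0:ℝ) 1, ∀ μ : ℝ, 0 ≤ μ → IsUnit (Ps Φ s μ))
    (hC : ∀ s ∈ Icc (0:ℝ) 1, ∀ μ : ℝ, 0 ≤ μ → ‖(Ps Φ s μ)⁻¹‖ ≤ C / (1 + μ))
    {t₀ : ℝ} (ht₀ : t₀ ∈ Icc (0:ℝ) 1) :
    HasDerivAt (fun t => ∫ μ in Ici (0:ℝ), Hf Φ (sig t) μ)
      ((6 * t₀ - 6 * t₀ ^ 2) • ((Φ - 1) * (Ps Φ (sig t₀) 0)⁻¹)) t₀ := by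
  have hc0 : (0:ℝ) < (Fintype.card n : ℝ) := by exact_mod_cast Fintype.card_pos
  have hb := hball_Ioo ht₀
  have hst : ∀ t ∈ Metric.ball t₀ (1/2 : ℝ), sig t ∈ Icc (0:ℝ) 1 := by
    intro t ht
    exact sig_mem (hb t ht).1.le (hb t ht).2.le
  have ht₀mem : t₀ ∈ Metric.ball t₀ (1/2 : ℝ) := Metric.mem_ball_self (by norm_num)
  have key := hasDerivAt_integral_of_dominated_loc_of_deriv_le
    (F := fun t μ => Hf Φ (sig t) μ)
    (F' := fun t μ => (6 * t - 6 * t ^ 2) • Kf Φ (sig t) μ)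
    (μ := volume.restrict (Ici (0:ℝ)))
    (bound := fun μ => (14 * ((Fintype.card n : ℝ) ^ 2 * ‖Φ - 1‖ * C ^ 2)) * ((1 + μ)⁻¹) ^ 2)
    (x₀ := t₀) (s := Metric.ball t₀ (1/2)) (Metric.ball_mem_nhds t₀ (by norm_num))
    ?hmeas ?hint ?hmeas' ?hbound ?hbint ?hdiff
  · obtain ⟨-, hder⟩ := key
    rw [integral_smul, integral_Kf_eq Φ hC0 hu hC (hst t₀ ht₀mem)] at hder
    exact hder
  case hmeas =>
    filter_upwards [Metric.ball_mem_nhds t₀ (by norm_num : (0:ℝ) < 1/2)] with t ht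
    exact (contOn_Hf Φ hu (hst t ht)).aestronglyMeasurable measurableSet_Ici
  case hint => exact int_Hf Φ hC0 hu hC (hst t₀ ht₀mem)
  case hmeas' =>
    exact (((contOn_Kf Φ hu (hst t₀ ht₀mem))).const_smul
      (6 * t₀ - 6 * t₀ ^ 2)).aestronglyMeasurable measurableSet_Ici
  case hbound =>
    filter_upwards [ae_restrict_mem measurableSet_Ici] with μ hμ
    intro t ht
    rw [norm_smul, Real.norm_eq_abs]
    calc |6 * t - 6 * t ^ 2| * ‖Kf Φ (sig t) μ‖
        ≤ 14 * (((Fintype.card n : ℝ) ^ 2 * ‖Φ - 1‖ * C ^ 2) * ((1 + μ)⁻¹) ^ 2) := by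
          apply mul_le_mul (sig_deriv_abs_le (hb t ht)) (norm_Kf_le Φ hC0 hC (hst t ht) hμ)
            (norm_nonneg _) (by norm_num)
      _ = (14 * ((Fintype.card n : ℝ) ^ 2 * ‖Φ - 1‖ * C ^ 2)) * ((1 + μ)⁻¹) ^ 2 := by ring
  case hbint => exact integrableOn_inv_sq.const_mul _
  case hdiff =>
    filter_upwards [ae_restrict_mem measurableSet_Ici] with μ hμ
    intro t ht
    exact hasDerivAt_Hf_sig Φ hu hμ (hb t ht)

end Bounds

end MagnusAux


open MagnusAux in
/-- **Lemma 1 (existence of the integral formula for the logarithm).**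
If the invertible complex matrix `Φ` has no eigenvalue in `(-∞, 0]`, then the improper
integral `(Φ - I) ∫₀^∞ (1/(1+μ)) (μI + Φ)⁻¹ dμ` converges and is a logarithm of `Φ`. -/
theorem magnus_stmt0 {n : Type*} [Fintype n] [DecidableEq n] (Φ : Matrix n n ℂ)
    (hΦ : IsUnit Φ)
    (hspec : ∀ x : ℝ, x ≤ 0 → (x : ℂ) ∉ spectrum ℂ Φ) :
    @MeasureTheory.IntegrableOn _ _ _ _ SeminormedAddGroup.toContinuousENorm
      (fun μ : ℝ => (1 / (1 + (μ : ℂ))) • ((μ : ℂ) • (1 : Matrix n n ℂ) + Φ)⁻¹)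
      (Set.Ici 0) MeasureTheory.volume ∧
    NormedSpace.exp
      ((Φ - 1) *
        ∫ μ : ℝ in Set.Ici 0,
          (1 / (1 + (μ : ℂ))) • ((μ : ℂ) • (1 : Matrix n n ℂ) + Φ)⁻¹) = Φ := by
  rcases isEmpty_or_nonempty n with hn | hn
  · haveI : Subsingleton (Matrix n n ℂ) :=
      ⟨fun a b => by funext i; exact (IsEmpty.false i).elim⟩
    constructor
    · have hz : (fun μ : ℝ => (1 / (1 + (μ : ℂ))) • ((μ : ℂ) • (1 : Matrix n n ℂ) + Φ)⁻¹)
          = fun _ => 0 := funext fun μ => Subsingleton.elim _ _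
      rw [hz]
      exact MeasureTheory.integrable_zero _ _ _
    · exact Subsingleton.elim _ _
  · -- the main case
    have hone : (1:ℝ) ∈ Icc (0:ℝ) 1 := ⟨zero_le_one, le_refl 1⟩
    have hu : ∀ s ∈ Icc (0:ℝ) 1, ∀ μ : ℝ, 0 ≤ μ → IsUnit (Ps Φ s μ) :=
      fun s hs μ hμ => isUnit_Ps Φ hspec hs hμ
    obtain ⟨C, hC0, hC⟩ := exists_resolvent_bound Φ hu
    have hrw : (fun μ : ℝ => (1 / (1 + (μ : ℂ))) • ((μ : ℂ) • (1 : Matrix n n ℂ) + Φ)⁻¹)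
        = fun μ : ℝ => (1 / (1 + (μ : ℂ))) • (Ps Φ 1 μ)⁻¹ := by
      funext μ
      rw [Ps_one]
    constructor
    · rw [hrw]
      exact int_g Φ hC0 hu hC hone
    -- now the exponential identity
    set B : ℝ → Matrix n n ℂ := fun t => ∫ μ in Ici (0:ℝ), Hf Φ (sig t) μ with hBdef
    set V : ℝ → Matrix n n ℂ := fun t => (Ps Φ (sig t) 0)⁻¹ with hVdef
    have hHfB : ∀ (s' ν : ℝ) (t : ℝ), Commute (Hf Φ s' ν) (B t) :=
      fun s' ν t => commute_integral (fun μ => commute_Hf_Hf Φ s' ν (sig t) μ)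
    have hBB : ∀ t t' : ℝ, Commute (B t) (B t') :=
      fun t t' => commute_integral (fun ν => (hHfB (sig t') ν t).symm)
    have hwd : ∀ t₀ ∈ Icc (0:ℝ) 1, HasDerivAt (fun t => NormedSpace.exp (B t) * V t) 0 t₀ := by
      intro t₀ ht₀
      have ht₀Ioo : t₀ ∈ Ioo (-(1/2 : ℝ)) (3/2) :=
        ⟨by linarith [ht₀.1], by linarith [ht₀.2]⟩
      have hBd : HasDerivAt B ((6 * t₀ - 6 * t₀ ^ 2) • ((Φ - 1) * V t₀)) t₀ :=
        hasDerivAt_B Φ hC0 hu hC ht₀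
      have hfun : (fun t => NormedSpace.exp (B t))
          = fun t => NormedSpace.exp (B t₀) * NormedSpace.exp (B t - B t₀) := by
        funext t
        rw [← Matrix.exp_add_of_commute (B t₀) (B t - B t₀)
          ((hBB t₀ t).sub_right (Commute.refl (B t₀))), add_sub_cancel]
      have hinner : HasDerivAt (fun t => NormedSpace.exp (B t - B t₀))
          ((6 * t₀ - 6 * t₀ ^ 2) • ((Φ - 1) * V t₀)) t₀ :=
        hasDerivAt_exp_of_zero (hBd.sub_const (B t₀)) (sub_self _)
      have hEd : HasDerivAt (fun t => NormedSpace.exp (B t))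
          (NormedSpace.exp (B t₀) * ((6 * t₀ - 6 * t₀ ^ 2) • ((Φ - 1) * V t₀))) t₀ := by
        rw [hfun]
        have hh := matmul_deriv (hasDerivAt_const t₀ (NormedSpace.exp (B t₀))) hinner
        simpa using hh
      have hVd : HasDerivAt V ((6 * t₀ - 6 * t₀ ^ 2) • -(Kf Φ (sig t₀) 0)) t₀ :=
        hasDerivAt_inv_sig Φ hu (le_refl 0) ht₀Ioo
      have h := matmul_deriv hEd hVd
      have hcm : Commute (Φ - 1) (V t₀) :=
        commute_inv_all ((commute_Phi_Ps Φ (sig t₀) 0).sub_left (Commute.one_left _))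
      have hzero : NormedSpace.exp (B t₀) * ((6 * t₀ - 6 * t₀ ^ 2) • ((Φ - 1) * V t₀)) * V t₀
          + NormedSpace.exp (B t₀) * ((6 * t₀ - 6 * t₀ ^ 2) • -(Kf Φ (sig t₀) 0)) = 0 := by
        have hKf0 : Kf Φ (sig t₀) 0 = V t₀ * (Φ - 1) * V t₀ := rfl
        rw [hKf0, smul_neg, mul_neg, mul_smul_comm, mul_smul_comm, smul_mul_assoc,
          ← smul_neg, ← smul_add]
        rw [hcm.eq]
        have hfin : NormedSpace.exp (B t₀) * (V t₀ * (Φ - 1)) * V t₀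
            + -(NormedSpace.exp (B t₀) * (V t₀ * (Φ - 1) * V t₀)) = 0 := by
          rw [add_neg_eq_zero]
          noncomm_ring
        rw [hfin, smul_zero]
      rw [hzero] at h
      exact h
    have hwc : ContinuousOn (fun t => NormedSpace.exp (B t) * V t) (Icc (0:ℝ) 1) :=
      fun t ht => ((hwd t ht).continuousAt).continuousWithinAt
    have hconst := constant_of_has_deriv_right_zero hwc
      (fun t ht => ((hwd t ⟨ht.1, ht.2.le⟩).hasDerivWithinAt))
    have hw10 := hconst 1 ⟨zero_le_one, le_refl 1⟩
    have hB0 : B 0 = 0 := by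
      rw [hBdef]
      simp only [sig_zero]
      apply MeasureTheory.integral_eq_zero_of_ae
      filter_upwards [MeasureTheory.ae_restrict_mem measurableSet_Ici] with μ hμ
      exact Hf_zero_of_nonneg Φ hμ
    have hV0 : V 0 = 1 := by
      rw [hVdef]
      simp only [sig_zero]
      rw [Ps_zero_left]
      norm_num
    have hw0 : NormedSpace.exp (B 0) * V 0 = 1 := by
      rw [hB0, hV0, NormedSpace.exp_zero, mul_one]
    have hV1 : V 1 = Φ⁻¹ := by
      rw [hVdef]
      simp only [sig_one, Ps_one_zero]
    have hw1 : NormedSpace.exp (B 1) * Φ⁻¹ = 1 := by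
      rw [← hV1]
      rw [hw10, hw0]
    have hexpB1 : NormedSpace.exp (B 1) = Φ := by
      have hdetΦ := (Matrix.isUnit_iff_isUnit_det Φ).mp hΦ
      calc NormedSpace.exp (B 1) = NormedSpace.exp (B 1) * (Φ⁻¹ * Φ) := by
            rw [Matrix.nonsing_inv_mul Φ hdetΦ, mul_one]
        _ = (NormedSpace.exp (B 1) * Φ⁻¹) * Φ := by rw [mul_assoc]
        _ = 1 * Φ := by rw [hw1]
        _ = Φ := one_mul Φ
    -- identify the integral in the statement with B 1
    have hIeq : (Φ - 1) * (∫ μ : ℝ in Set.Ici 0,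
        (1 / (1 + (μ : ℂ))) • ((μ : ℂ) • (1 : Matrix n n ℂ) + Φ)⁻¹) = B 1 := by
      rw [hrw]
      refine (mul_integral _ (int_g Φ hC0 hu hC hone)).trans ?_
      rw [hBdef]
      simp only [sig_one]
      letI := MagnusAux.matNS (n := n) (R := ℝ)
      apply MeasureTheory.integral_congr_ae
      filter_upwards [MeasureTheory.ae_restrict_mem measurableSet_Ici] with μ hμ
      have := Hf_eq Φ 1 μ (hu 1 hone μ hμ) hμ
      rw [Complex.ofReal_one, one_smul] at this
      exact this
    rw [hIeq, hexpB1]
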